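/- Let σ = τ_x and let u = δ + βy + γz with δ, β, γ ∈ O_K and ν_D(u) = 0 (note σ(u) = u, so u is a symmetric unit of O_D). Then δ ∈ O_K^× and there exists an invertible t ∈ D with u = σ(t)·δ·t; that is, ⟨u⟩ ≅ ⟨δ⟩ as hermitian forms over (D, τ_x). -/

import Mathlib

noncomputable section

/-- A surjective discrete valuation `ν : K → ℤ` on a field `K`
(the value of `ν` at `0` is irrelevant: only nonzero elements are constrained). -/
structure DVal (K : Type) [Field K] : Type where
  ν : K → ℤ
  ν_mul : ∀ x y : K, x ≠ 0 → y ≠ 0 → ν (x * y) = ν x + ν y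
  ν_add : ∀ x y : K, x ≠ 0 → y ≠ 0 → x + y ≠ 0 → min (ν x) (ν y) ≤ ν (x + y)
  ν_one : ν 1 = 0
  ν_surj : ∀ n : ℤ, ∃ x : K, x ≠ 0 ∧ ν x = n

namespace DVal

variable {K : Type} [Field K]

/-- `x` belongs to the valuation ring `O_K`. -/
def Int (V : DVal K) (x : K) : Prop := x = 0 ∨ 0 ≤ V.ν x

/-- `x` is a unit of the valuation ring `O_K`. -/
def IntUnit (V : DVal K) (x : K) : Prop := x ≠ 0 ∧ V.ν x = 0

/-- `x` belongs to the maximal ideal `m_K` of the valuation ring `O_K`. -/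
def MaxIdeal (V : DVal K) (x : K) : Prop := x = 0 ∨ 1 ≤ V.ν x

/-- `K` is complete with respect to the valuation `ν`: every Cauchy sequence converges. -/
def IsComplete (V : DVal K) : Prop :=
  ∀ f : ℕ → K,
    (∀ M : ℤ, ∃ N : ℕ, ∀ m n : ℕ, N ≤ m → N ≤ n →
      f m - f n = 0 ∨ M ≤ V.ν (f m - f n)) →
    ∃ L : K, ∀ M : ℤ, ∃ N : ℕ, ∀ n : ℕ, N ≤ n →
      f n - L = 0 ∨ M ≤ V.ν (f n - L)

/-- The residue field `k = O_K/m_K` has characteristic different from `2`,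
i.e. `2` is a unit of the valuation ring `O_K`. -/
def ResCharNeTwo (V : DVal K) : Prop := (2 : K) ≠ 0 ∧ V.ν 2 = 0

end DVal

/-- The reduced norm of a quaternion `u = δ + αx + βy + γz ∈ ℍ[K,a,b]`:
`Nrd u = u·τ(u) = δ² - aα² - bβ² + abγ²`. -/
def qnrd {K : Type} [Field K] (a b : K) (u : QuaternionAlgebra K a 0 b) : K :=
  u.re ^ 2 - a * u.imI ^ 2 - b * u.imJ ^ 2 + a * b * u.imK ^ 2

/-- The canonical involution `τ(δ + αx + βy + γz) = δ - αx - βy - γz` of `ℍ[K,a,b]`. -/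
def qtau {K : Type} [Field K] {a b : K} (u : QuaternionAlgebra K a 0 b) :
    QuaternionAlgebra K a 0 b :=
  ⟨u.re, -u.imI, -u.imJ, -u.imK⟩

/-- The norm form `⟨1,-a,-b,ab⟩` of `ℍ[K,a,b]` is anisotropic over `K`
(equivalently, `ℍ[K,a,b]` is a division ring). -/
def QAniso {K : Type} [Field K] (a b : K) : Prop :=
  ∀ d e f g : K, d ^ 2 - a * e ^ 2 - b * f ^ 2 + a * b * g ^ 2 = 0 →
    d = 0 ∧ e = 0 ∧ f = 0 ∧ g = 0

/-- The valuation `ν_D(u) = (1/2)·ν_K(Nrd u)` of the quaternion division algebra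
`D = ℍ[K,a,b]` (at nonzero `u`). -/
def qnu {K : Type} [Field K] (V : DVal K) (a b : K) (u : QuaternionAlgebra K a 0 b) : ℚ :=
  (V.ν (qnrd a b u) : ℚ) / 2

/-! ### Auxiliary valuation lemmas -/

namespace DVal

variable {K : Type} [Field K] (V : DVal K)

/-- `x = 0` or `ν x ≥ M`. -/
def Small (M : ℤ) (x : K) : Prop := x = 0 ∨ M ≤ V.ν x

variable {V}

lemma nu_neg {x : K} (hx : x ≠ 0) : V.ν (-x) = V.ν x := by
  have hm1 : V.ν (-1 : K) = 0 := by
    have := V.ν_mul (-1) (-1) (by norm_num) (by norm_num)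
    simp [V.ν_one] at this
    omega
  have : V.ν ((-1) * x) = V.ν (-1) + V.ν x := V.ν_mul _ _ (by norm_num) hx
  simpa [hm1] using this

lemma nu_inv {x : K} (hx : x ≠ 0) : V.ν x⁻¹ = -V.ν x := by
  have := V.ν_mul x x⁻¹ hx (inv_ne_zero hx)
  rw [mul_inv_cancel₀ hx, V.ν_one] at this
  omega

lemma small_neg {M : ℤ} {x : K} (h : V.Small M x) : V.Small M (-x) := by
  rcases h with h | h
  · left; simp [h]
  · rcases eq_or_ne x 0 with h0 | h0
    · left; simp [h0]
    · right; rwa [nu_neg h0]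

lemma small_add {M : ℤ} {x y : K} (hx : V.Small M x) (hy : V.Small M y) :
    V.Small M (x + y) := by
  rcases hx with hx | hx
  · simpa [hx] using hy
  · rcases hy with hy | hy
    · rw [hy, add_zero]; exact Or.inr hx
    · rcases eq_or_ne x 0 with h0 | h0
      · rw [h0, zero_add]; exact Or.inr hy
      rcases eq_or_ne y 0 with h1 | h1
      · rw [h1, add_zero]; exact Or.inr hx
      rcases eq_or_ne (x + y) 0 with h2 | h2
      · exact Or.inl h2
      · right
        have := V.ν_add x y h0 h1 h2
        omega

lemma small_sub {M : ℤ} {x y : K} (hx : V.Small M x) (hy : V.Small M y) :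
    V.Small M (x - y) := by
  simpa [sub_eq_add_neg] using V.small_add hx (V.small_neg hy)

lemma small_mul {M N : ℤ} {x y : K} (hx : V.Small M x) (hy : V.Small N y) :
    V.Small (M + N) (x * y) := by
  rcases hx with hx | hx
  · left; simp [hx]
  rcases hy with hy | hy
  · left; simp [hy]
  rcases eq_or_ne x 0 with h0 | h0
  · left; simp [h0]
  rcases eq_or_ne y 0 with h1 | h1
  · left; simp [h1]
  right
  rw [V.ν_mul x y h0 h1]
  omega

lemma small_mono {M M' : ℤ} {x : K} (h : M' ≤ M) (hx : V.Small M x) : V.Small M' x := by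
  rcases hx with hx | hx
  · exact Or.inl hx
  · exact Or.inr (le_trans h hx)

lemma small_unit {x : K} (hx : x ≠ 0) (hν : V.ν x = 0) :
    V.Small 0 x⁻¹ := Or.inr (by rw [nu_inv hx]; omega)

/-- adding something strictly smaller preserves valuation and nonvanishing -/
lemma add_small {x y : K} (hx : x ≠ 0) (hy : V.Small (V.ν x + 1) y) :
    x + y ≠ 0 ∧ V.ν (x + y) = V.ν x := by
  rcases eq_or_ne y 0 with hy0 | hy0
  · simp [hy0, hx]
  rcases hy with hy | hy
  · exact absurd hy hy0
  have hxy : x + y ≠ 0 := by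
    intro h
    have : y = -x := by linear_combination h
    rw [this, nu_neg hx] at hy
    omega
  refine ⟨hxy, ?_⟩
  have h1 := V.ν_add x y hx hy0 hxy
  have h3 := V.ν_add (x + y) (-y) hxy (neg_ne_zero.mpr hy0) (by simpa using hx)
  rw [nu_neg hy0] at h3
  rw [show x + y + -y = x by ring] at h3
  omega

/-- Hensel's lemma for square roots of elements `≡ 1 (mod m_K)`. -/
lemma sqrt (hcomp : V.IsComplete) (hchar : V.ResCharNeTwo) {ξ : K}
    (hξ : V.Small 1 (ξ - 1)) :
    ∃ c : K, c ≠ 0 ∧ V.ν c = 0 ∧ V.Small 1 (c - 1) ∧ c ^ 2 = ξ := by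
  obtain ⟨h2, hν2⟩ := hchar
  have hone : (1 : K) ≠ 0 := one_ne_zero
  set f : ℕ → K := fun n => Nat.rec (1 : K) (fun _ c => (c ^ 2 + ξ) / (2 * c)) n with hf
  have hf0 : f 0 = 1 := rfl
  have hfs : ∀ n, f (n + 1) = (f n ^ 2 + ξ) / (2 * f n) := fun n => rfl
  have key : ∀ n, f n ≠ 0 ∧ V.ν (f n) = 0 ∧ V.Small 1 (f n - 1) ∧
      V.Small (2 ^ n) (f n ^ 2 - ξ) := by
    intro n
    induction n with
    | zero =>
      refine ⟨by simp [hf0], by simp [hf0, V.ν_one], Or.inl (by rw [hf0]; ring), ?_⟩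
      have : f 0 ^ 2 - ξ = -(ξ - 1) := by rw [hf0]; ring
      rw [this]
      exact V.small_neg (by simpa using hξ)
    | succ n ih =>
      obtain ⟨hc0, hνc, hc1, he⟩ := ih
      set c := f n with hcdef
      have h2c : (2 : K) * c ≠ 0 := mul_ne_zero h2 hc0
      have hν2c : V.ν (2 * c) = 0 := by rw [V.ν_mul 2 c h2 hc0, hν2, hνc]; ring
      have hsmall_inv : V.Small 0 ((2 * c)⁻¹) := small_unit h2c hν2c
      have hdiff : f (n + 1) - c = -((c ^ 2 - ξ) * (2 * c)⁻¹) := by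
        rw [hfs n, ← hcdef]
        field_simp
        ring
      have hdsmall : V.Small (2 ^ n) (f (n + 1) - c) := by
        rw [hdiff]
        exact V.small_neg (by simpa using V.small_mul he hsmall_inv)
      have hone' : V.Small 1 (f (n + 1) - 1) := by
        have : f (n + 1) - 1 = (f (n + 1) - c) + (c - 1) := by ring
        rw [this]
        refine V.small_add (V.small_mono ?_ hdsmall) hc1
        calc (1 : ℤ) = 2 ^ 0 := rfl
          _ ≤ 2 ^ n := pow_le_pow_right₀ one_le_two (Nat.zero_le n)
      have herr : V.Small (2 ^ (n + 1)) (f (n + 1) ^ 2 - ξ) := by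
        have hid : f (n + 1) ^ 2 - ξ =
            ((c ^ 2 - ξ) * (c ^ 2 - ξ)) * (((2 * c) * (2 * c))⁻¹) := by
          rw [hfs n, ← hcdef]
          field_simp
          ring
        rw [hid]
        have h4 : V.ν ((2 * c) * (2 * c)) = 0 := by
          rw [V.ν_mul _ _ h2c h2c, hν2c]; ring
        have := V.small_mul (V.small_mul he he) (small_unit (mul_ne_zero h2c h2c) h4)
        refine V.small_mono ?_ (by simpa using this)
        rw [pow_succ]
        omega
      have hnz : f (n + 1) ≠ 0 ∧ V.ν (f (n + 1)) = 0 := by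
        have := V.add_small hone (by simpa [V.ν_one] using hone' : V.Small (V.ν (1:K) + 1) (f (n+1) - 1))
        rw [show (1 : K) + (f (n + 1) - 1) = f (n + 1) by ring] at this
        rw [V.ν_one] at this
        exact this
      exact ⟨hnz.1, hnz.2, hone', herr⟩
  have cauchy : ∀ n k, V.Small (2 ^ n) (f (n + k) - f n) := by
    intro n k
    induction k with
    | zero => exact Or.inl (by simp)
    | succ k ih =>
      have step : V.Small (2 ^ (n + k)) (f (n + k + 1) - f (n + k)) := by
        obtain ⟨hc0, hνc, _, he⟩ := key (n + k)
        have h2c : (2 : K) * f (n + k) ≠ 0 := mul_ne_zero h2 hc0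
        have hν2c : V.ν (2 * f (n + k)) = 0 := by
          rw [V.ν_mul 2 _ h2 hc0, hν2, hνc]; ring
        have hdiff : f (n + k + 1) - f (n + k) =
            -((f (n + k) ^ 2 - ξ) * (2 * f (n + k))⁻¹) := by
          rw [hfs (n + k)]
          field_simp
          ring
        rw [hdiff]
        exact V.small_neg (by simpa using V.small_mul he (small_unit h2c hν2c))
      have : f (n + (k + 1)) - f n = (f (n + k + 1) - f (n + k)) + (f (n + k) - f n) := by
        rw [show n + (k + 1) = n + k + 1 by omega]; ring
      rw [this]
      refine V.small_add (V.small_mono ?_ step) ih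
      exact pow_le_pow_right₀ one_le_two (by omega)
  have hCauchySeq : ∀ M : ℤ, ∃ N : ℕ, ∀ m n : ℕ, N ≤ m → N ≤ n →
      f m - f n = 0 ∨ M ≤ V.ν (f m - f n) := by
    intro M
    refine ⟨M.toNat, fun m n hm hn => ?_⟩
    have hpow : M ≤ 2 ^ M.toNat := by
      calc M ≤ (M.toNat : ℤ) := Int.self_le_toNat M
        _ ≤ 2 ^ M.toNat := by exact_mod_cast (Nat.lt_two_pow_self (n := M.toNat)).le
    have hm' : V.Small (2 ^ M.toNat) (f m - f M.toNat) := by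
      have := cauchy M.toNat (m - M.toNat)
      rwa [Nat.add_sub_cancel' hm] at this
    have hn' : V.Small (2 ^ M.toNat) (f n - f M.toNat) := by
      have := cauchy M.toNat (n - M.toNat)
      rwa [Nat.add_sub_cancel' hn] at this
    have : V.Small M (f m - f n) := by
      have := V.small_sub hm' hn'
      rw [show f m - f M.toNat - (f n - f M.toNat) = f m - f n by ring] at this
      exact V.small_mono hpow this
    exact this
  obtain ⟨L, hL⟩ := hcomp f hCauchySeq
  have hL1 : V.Small 1 (L - 1) := by
    obtain ⟨N, hN⟩ := hL 1
    have h1 : V.Small 1 (f N - L) := hN N le_rfl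
    have h2' : V.Small 1 (f N - 1) := (key N).2.2.1
    have : L - 1 = (f N - 1) - (f N - L) := by ring
    rw [this]
    exact V.small_sub h2' h1
  have hLunit : L ≠ 0 ∧ V.ν L = 0 := by
    have := V.add_small hone (by simpa [V.ν_one] using hL1 : V.Small (V.ν (1:K) + 1) (L - 1))
    rw [show (1 : K) + (L - 1) = L by ring, V.ν_one] at this
    exact this
  have hLsq : L ^ 2 = ξ := by
    by_contra hne
    have hne' : L ^ 2 - ξ ≠ 0 := sub_ne_zero.mpr hne
    set M : ℤ := V.ν (L ^ 2 - ξ) + 1 with hM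
    obtain ⟨N, hN⟩ := hL M
    set n : ℕ := max N M.toNat with hn
    have hsmall1 : V.Small M (f n - L) := hN n (le_max_left _ _)
    have hpow : M ≤ 2 ^ n := by
      calc M ≤ (M.toNat : ℤ) := Int.self_le_toNat M
        _ ≤ (2 ^ M.toNat : ℤ) := by exact_mod_cast (Nat.lt_two_pow_self (n := M.toNat)).le
        _ ≤ 2 ^ n := by
            have : M.toNat ≤ n := le_max_right _ _
            exact_mod_cast Nat.pow_le_pow_right (by norm_num) this
    have herr : V.Small M (f n ^ 2 - ξ) := V.small_mono hpow ((key n).2.2.2)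
    have hsum : V.Small 0 (L + f n) := by
      have : L + f n = 2 + ((L - 1) + (f n - 1)) := by ring
      rw [this]
      refine V.small_add (Or.inr (by rw [hν2])) ?_
      exact V.small_mono (by omega) (V.small_add hL1 ((key n).2.2.1))
    have : V.Small M (L ^ 2 - ξ) := by
      have hfact : L ^ 2 - ξ = (L + f n) * (-(f n - L)) + (f n ^ 2 - ξ) := by ring
      rw [hfact]
      refine V.small_add ?_ herr
      have := V.small_mul hsum (V.small_neg hsmall1)
      simpa using this
    rcases this with h | h
    · exact hne' h
    · omega
  exact ⟨L, hLunit.1, hLunit.2, hL1, hLsq⟩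

end DVal

/-- A quaternion with nonzero reduced norm is a unit. -/
lemma quat_isUnit {K : Type} [Field K] {a b : K} (u : QuaternionAlgebra K a 0 b)
    (h : qnrd a b u ≠ 0) : IsUnit u := by
  refine ⟨⟨u, (qnrd a b u)⁻¹ • qtau u, ?_, ?_⟩, rfl⟩ <;>
  · ext <;>
      simp only [qtau, QuaternionAlgebra.re_mul, QuaternionAlgebra.imI_mul,
        QuaternionAlgebra.imJ_mul, QuaternionAlgebra.imK_mul, QuaternionAlgebra.re_smul,
        QuaternionAlgebra.imI_smul, QuaternionAlgebra.imJ_smul, QuaternionAlgebra.imK_smul,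
        QuaternionAlgebra.re_one, QuaternionAlgebra.imI_one, QuaternionAlgebra.imJ_one,
        QuaternionAlgebra.imK_one, smul_eq_mul] <;>
      simp only [qnrd] at h ⊢ <;> field_simp <;> ring

lemma quat_inv_x {K : Type} [Field K] {a b : K} (ha0 : a ≠ 0)
    (mu : QuaternionAlgebra K a 0 b)
    (hmu : (⟨0, 1, 0, 0⟩ : QuaternionAlgebra K a 0 b) * mu = 1) :
    mu = ⟨0, a⁻¹, 0, 0⟩ := by
  have h1 := congrArg QuaternionAlgebra.re hmu
  have h2 := congrArg QuaternionAlgebra.imI hmu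
  have h3 := congrArg QuaternionAlgebra.imJ hmu
  have h4 := congrArg QuaternionAlgebra.imK hmu
  simp only [QuaternionAlgebra.re_mul, QuaternionAlgebra.imI_mul, QuaternionAlgebra.imJ_mul,
    QuaternionAlgebra.imK_mul, QuaternionAlgebra.re_one, QuaternionAlgebra.imI_one,
    QuaternionAlgebra.imJ_one, QuaternionAlgebra.imK_one] at h1 h2 h3 h4
  ext <;> simp at h1 h2 h3 h4 ⊢
  · exact h2
  · field_simp
    linear_combination h1
  · exact h4
  · rcases h3 with h | h
    · exact absurd h ha0
    · exact h

set_option maxHeartbeats 1600000 in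
/-- if `u = δ + βy + γz` is a symmetric unit of `O_D` for `σ = τ_x` then
`δ ∈ O_K^×` and `⟨u⟩ ≅ ⟨δ⟩` over `(D, τ_x)`. -/
theorem stmt_6 (K : Type) [Field K] (V : DVal K)
    -- K is complete with residue field of characteristic ≠ 2
    (hcomp : V.IsComplete) (hchar : V.ResCharNeTwo)
    -- D = ℍ[K,a,ϖ] with a ∈ O_K^×, ϖ a uniformizer, D a division ring
    (a ϖ : K) (ha0 : a ≠ 0) (hva : V.ν a = 0) (hϖ0 : ϖ ≠ 0) (hvϖ : V.ν ϖ = 1)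
    (haniso : QAniso a ϖ)
    -- σ = τ_x (μ = λ⁻¹)
    (mu : QuaternionAlgebra K a 0 ϖ)
    (hmu : (⟨0, 1, 0, 0⟩ : QuaternionAlgebra K a 0 ϖ) * mu = 1) (hmu' : mu * (⟨0, 1, 0, 0⟩ : QuaternionAlgebra K a 0 ϖ) = 1)
    (σ : QuaternionAlgebra K a 0 ϖ → QuaternionAlgebra K a 0 ϖ)
    (hσ : ∀ u, σ u = (⟨0, 1, 0, 0⟩ : QuaternionAlgebra K a 0 ϖ) * qtau u * mu)
    -- u = δ + βy + γz with coordinates in O_K and ν_D(u) = 0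
    (δ β γ : K) (hδ : V.Int δ) (hβ : V.Int β) (hγ : V.Int γ)
    (hu0 : (⟨δ, 0, β, γ⟩ : QuaternionAlgebra K a 0 ϖ) ≠ 0)
    (hval : qnu V a ϖ (⟨δ, 0, β, γ⟩ : QuaternionAlgebra K a 0 ϖ) = 0) :
    V.IntUnit δ ∧ ∃ t : QuaternionAlgebra K a 0 ϖ, IsUnit t ∧
      (⟨δ, 0, β, γ⟩ : QuaternionAlgebra K a 0 ϖ) =
        σ t * (⟨δ, 0, 0, 0⟩ : QuaternionAlgebra K a 0 ϖ) * t := by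
  obtain ⟨h2, hν2⟩ := hchar
  have hβ' : V.Small 0 β := hβ
  have hγ' : V.Small 0 γ := hγ
  set u : QuaternionAlgebra K a 0 ϖ := ⟨δ, 0, β, γ⟩ with hu
  set s : K := ϖ * β ^ 2 - a * ϖ * γ ^ 2 with hs
  have hqnrd : qnrd a ϖ u = δ ^ 2 - s := by simp [qnrd, hu, hs]; ring
  -- nonzero norm
  have hnrd_ne : qnrd a ϖ u ≠ 0 := by
    intro h
    obtain ⟨h1, h2', h3, h4⟩ := haniso δ 0 β γ (by simpa [qnrd, hu] using h)
    apply hu0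
    rw [hu, h1, h3, h4]
    rfl
  -- norm has valuation zero
  have hνnrd : V.ν (qnrd a ϖ u) = 0 := by
    have := hval
    unfold qnu at this
    field_simp at this
    exact_mod_cast this
  -- s is in the maximal ideal
  have hss : V.Small 1 s := by
    have hid : s = ϖ * (β * β - a * (γ * γ)) := by rw [hs]; ring
    rw [hid]
    have h1 : V.Small 0 (β * β - a * (γ * γ)) :=
      V.small_sub (by simpa using V.small_mul hβ' hβ')
        (by simpa using V.small_mul (Or.inr hva.ge) (V.small_mul hγ' hγ'))
    simpa using V.small_mul (Or.inr hvϖ.ge : V.Small 1 ϖ) h1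
  -- δ is a unit of O_K
  have hδ0 : δ ≠ 0 := by
    intro h
    have hqe : qnrd a ϖ u = -s := by rw [hqnrd, h]; ring
    have hsm : V.Small 1 (qnrd a ϖ u) := hqe ▸ V.small_neg hss
    rcases hsm with h' | h'
    · exact hnrd_ne h'
    · omega
  have hνδ : V.ν δ = 0 := by
    by_contra h
    have h1 : 1 ≤ V.ν δ := by
      rcases hδ with h' | h'
      · exact absurd h' hδ0
      · omega
    have hδδ : V.Small 2 (δ ^ 2) := by
      have := V.small_mul (Or.inr h1 : V.Small 1 δ) (Or.inr h1 : V.Small 1 δ)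
      rw [← pow_two] at this
      exact this
    have hsm : V.Small 1 (qnrd a ϖ u) := by
      rw [hqnrd]
      exact V.small_sub (V.small_mono (by omega) hδδ) hss
    rcases hsm with h' | h'
    · exact hnrd_ne h'
    · omega
  have hδunit : V.IntUnit δ := ⟨hδ0, hνδ⟩
  -- s' = s/δ² is in the maximal ideal
  have hδ2 : δ ^ 2 ≠ 0 := pow_ne_zero 2 hδ0
  have hνδ2 : V.ν (δ ^ 2) = 0 := by
    rw [pow_two, V.ν_mul δ δ hδ0 hδ0, hνδ]; ring
  have hss' : V.Small 1 (s * (δ ^ 2)⁻¹) :=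
    by simpa using V.small_mul hss (DVal.small_unit hδ2 hνδ2)
  -- first square root : r² = 1 - s/δ²
  obtain ⟨r, hr0, hνr, hr1, hr2⟩ := DVal.sqrt hcomp ⟨h2, hν2⟩
    (show V.Small 1 ((1 - s * (δ ^ 2)⁻¹) - 1) by
      rw [show (1 - s * (δ ^ 2)⁻¹) - 1 = -(s * (δ ^ 2)⁻¹) by ring]
      exact V.small_neg hss')
  -- 1 + r is a unit
  have h1r : (1 : K) + r ≠ 0 ∧ V.ν (1 + r) = 0 := by
    have := V.add_small h2 (show V.Small (V.ν (2:K) + 1) (r - 1) by rw [hν2]; exact hr1)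
    rwa [show (2 : K) + (r - 1) = 1 + r by ring, hν2] at this
  -- second square root : c² = (1+r)/2
  obtain ⟨c, hc0, hνc, hc1, hc2⟩ := DVal.sqrt hcomp ⟨h2, hν2⟩
    (show V.Small 1 (((1 + r) / 2) - 1) by
      rw [show ((1 + r) / 2) - 1 = (r - 1) * 2⁻¹ by field_simp; ring]
      simpa using V.small_mul hr1 (DVal.small_unit h2 hν2))
  -- the element t
  have h2cδ : 2 * c * δ ≠ 0 := mul_ne_zero (mul_ne_zero h2 hc0) hδ0
  have hν2cδ : V.ν (2 * c * δ) = 0 := by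
    rw [V.ν_mul _ _ (mul_ne_zero h2 hc0) hδ0, V.ν_mul _ _ h2 hc0, hν2, hνc, hνδ]; ring
  set e : K := (2 * c * δ)⁻¹ with he
  have he0 : e ≠ 0 := inv_ne_zero h2cδ
  have hνe : V.ν e = 0 := by rw [he, DVal.nu_inv h2cδ, hν2cδ]; ring
  set t : QuaternionAlgebra K a 0 ϖ := ⟨c, 0, β * e, γ * e⟩ with ht
  -- t is a unit
  have hc2' : c ^ 2 ≠ 0 := pow_ne_zero 2 hc0
  have hνc2 : V.ν (c ^ 2) = 0 := by rw [pow_two, V.ν_mul c c hc0 hc0, hνc]; ring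
  have hνe2 : V.ν (e ^ 2) = 0 := by rw [pow_two, V.ν_mul e e he0 he0, hνe]; ring
  have hse2 : V.Small 1 (s * e ^ 2) := by
    simpa using V.small_mul hss (Or.inr hνe2.ge : V.Small 0 (e ^ 2))
  have hnrdt_ne : qnrd a ϖ t ≠ 0 := by
    have hid : qnrd a ϖ t = c ^ 2 + -(s * e ^ 2) := by
      rw [ht, hs]
      simp only [qnrd]
      ring
    rw [hid]
    refine (V.add_small hc2' ?_).1
    rw [hνc2]
    exact V.small_neg hse2
  refine ⟨hδunit, t, quat_isUnit t hnrdt_ne, ?_⟩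
  -- the isometry
  rw [hσ t, quat_inv_x ha0 mu hmu]
  have hrr : r ^ 2 * δ ^ 2 = δ ^ 2 - s := by
    have := hr2
    field_simp at this
    linear_combination this
  have hcc : 2 * c ^ 2 = 1 + r := by
    rw [hc2]; field_simp
  ext <;>
    simp only [ht, hu, qtau, QuaternionAlgebra.re_mul, QuaternionAlgebra.imI_mul,
      QuaternionAlgebra.imJ_mul, QuaternionAlgebra.imK_mul]
  case re =>
    rw [he]
    field_simp
    linear_combination (a * δ * δ ^ 2 * (-2 * r - (2 * c ^ 2 - 1 - r))) * hcc -
      (a * δ) * hrr + (a * δ) * hs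
  case imI =>
    rw [he]
    field_simp
    ring
  case imJ =>
    rw [he]
    field_simp
    try ring
  case imK =>
    rw [he]
    field_simp
    try ring
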